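/- arXiv:1503.00527 — 4 statements merged into one kernel-verified Lean document; each statement's English description precedes it below -/
import Mathlib

section
/- In the tied braid monoid TB_n (with σ_i invertible), for |j-i|=1 the four elements σ_j^{-1}η_iσ_j, σ_jη_iσ_j^{-1}, σ_iη_jσ_i^{-1}, and σ_i^{-1}η_jσ_i are all equal. -/
theorem tb_eta_four_expressions
    {M : Type*} [Monoid M] (n : ℕ) (σ σi η : ℕ → M)
    (hinv : ∀ i, 1 ≤ i → i ≤ n - 1 → σ i * σi i = 1 ∧ σi i * σ i = 1)
    (hssfar : ∀ i j, 1 ≤ i → i ≤ n - 1 → 1 ≤ j → j ≤ n - 1 → 1 < Nat.dist i j →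
      σ i * σ j = σ j * σ i)
    (hbraid : ∀ i j, 1 ≤ i → i ≤ n - 1 → 1 ≤ j → j ≤ n - 1 → Nat.dist i j = 1 →
      σ i * σ j * σ i = σ j * σ i * σ j)
    (hee : ∀ i j, 1 ≤ i → i ≤ n - 1 → 1 ≤ j → j ≤ n - 1 → η i * η j = η j * η i)
    (hes : ∀ i, 1 ≤ i → i ≤ n - 1 → η i * σ i = σ i * η i)
    (hesfar : ∀ i j, 1 ≤ i → i ≤ n - 1 → 1 ≤ j → j ≤ n - 1 → 1 < Nat.dist i j →
      η i * σ j = σ j * η i)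
    (hess : ∀ i j, 1 ≤ i → i ≤ n - 1 → 1 ≤ j → j ≤ n - 1 → Nat.dist i j = 1 →
      η i * (σ j * σ i) = σ j * σ i * η j)
    (hessi : ∀ i j, 1 ≤ i → i ≤ n - 1 → 1 ≤ j → j ≤ n - 1 → Nat.dist i j = 1 →
      η i * (σ j * σi i) = σ j * σi i * η j)
    (hees : ∀ i j, 1 ≤ i → i ≤ n - 1 → 1 ≤ j → j ≤ n - 1 → Nat.dist i j = 1 →
      η i * η j * σ i = η j * σ i * η j ∧ η i * η j * σ i = σ i * (η i * η j))
    (hesq : ∀ i, 1 ≤ i → i ≤ n - 1 → η i * η i = η i) :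
    ∀ i j, 1 ≤ i → i ≤ n - 1 → 1 ≤ j → j ≤ n - 1 → Nat.dist i j = 1 →
      σi j * η i * σ j = σ j * η i * σi j ∧
      σi j * η i * σ j = σ i * η j * σi i ∧
      σi j * η i * σ j = σi i * η j * σ i := by
  intro i j hi1 hi2 hj1 hj2 hd
  have hd' : Nat.dist j i = 1 := by rw [Nat.dist_comm]; exact hd
  obtain ⟨hA1, hA2⟩ := hinv i hi1 hi2
  obtain ⟨hB1, hB2⟩ := hinv j hj1 hj2
  have fA1 : ∀ x, σ i * (σi i * x) = x := fun x => by rw [← mul_assoc, hA1, one_mul]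
  have fA2 : ∀ x, σi i * (σ i * x) = x := fun x => by rw [← mul_assoc, hA2, one_mul]
  have fB1 : ∀ x, σ j * (σi j * x) = x := fun x => by rw [← mul_assoc, hB1, one_mul]
  have fB2 : ∀ x, σi j * (σ j * x) = x := fun x => by rw [← mul_assoc, hB2, one_mul]
  have h1 := hess i j hi1 hi2 hj1 hj2 hd
  have h2 := hess j i hj1 hj2 hi1 hi2 hd'
  have h3 := hessi j i hj1 hj2 hi1 hi2 hd'
  have E1 : σi j * (η i * σ j) = σi i * (η j * σ i) := by
    have h := congrArg (fun x => σi i * (x * σ j)) h3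
    simp only [mul_assoc, hA1, hA2, hB1, hB2, fA1, fA2, fB1, fB2, mul_one, one_mul] at h
    exact h.symm
  have E2 : σ j * (η i * σi j) = σi i * (η j * σ i) := by
    have h := congrArg (fun x => σi i * (x * σi j)) h2
    simp only [mul_assoc, hA1, hA2, hB1, hB2, fA1, fA2, fB1, fB2, mul_one, one_mul] at h
    exact h.symm
  have E3 : σi j * (η i * σ j) = σ i * (η j * σi i) := by
    have h := congrArg (fun x => σi j * (x * σi i)) h1
    simp only [mul_assoc, hA1, hA2, hB1, hB2, fA1, fA2, fB1, fB2, mul_one, one_mul] at h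
    exact h
  simp only [mul_assoc]
  exact ⟨E1.trans E2.symm, E3, E1⟩
end

section
/- In the tied braid monoid TB_n, for j-i=1 the element η_{i,j+1} := σ_j^{-1}η_iσ_j commutes with both η_i and η_j, and satisfies η_{i,j+1}η_i = η_iη_j and η_{i,j+1}η_j = η_iη_j. -/
theorem tb_eta_long_commutes
    {M : Type*} [Monoid M] (n : ℕ) (σ σi η : ℕ → M)
    (hinv : ∀ i, 1 ≤ i → i ≤ n - 1 → σ i * σi i = 1 ∧ σi i * σ i = 1)
    (hssfar : ∀ i j, 1 ≤ i → i ≤ n - 1 → 1 ≤ j → j ≤ n - 1 → 1 < Nat.dist i j →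
      σ i * σ j = σ j * σ i)
    (hbraid : ∀ i j, 1 ≤ i → i ≤ n - 1 → 1 ≤ j → j ≤ n - 1 → Nat.dist i j = 1 →
      σ i * σ j * σ i = σ j * σ i * σ j)
    (hee : ∀ i j, 1 ≤ i → i ≤ n - 1 → 1 ≤ j → j ≤ n - 1 → η i * η j = η j * η i)
    (hes : ∀ i, 1 ≤ i → i ≤ n - 1 → η i * σ i = σ i * η i)
    (hesfar : ∀ i j, 1 ≤ i → i ≤ n - 1 → 1 ≤ j → j ≤ n - 1 → 1 < Nat.dist i j →
      η i * σ j = σ j * η i)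
    (hess : ∀ i j, 1 ≤ i → i ≤ n - 1 → 1 ≤ j → j ≤ n - 1 → Nat.dist i j = 1 →
      η i * (σ j * σ i) = σ j * σ i * η j)
    (hessi : ∀ i j, 1 ≤ i → i ≤ n - 1 → 1 ≤ j → j ≤ n - 1 → Nat.dist i j = 1 →
      η i * (σ j * σi i) = σ j * σi i * η j)
    (hees : ∀ i j, 1 ≤ i → i ≤ n - 1 → 1 ≤ j → j ≤ n - 1 → Nat.dist i j = 1 →
      η i * η j * σ i = η j * σ i * η j ∧ η i * η j * σ i = σ i * (η i * η j))
    (hesq : ∀ i, 1 ≤ i → i ≤ n - 1 → η i * η i = η i) :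
    ∀ i j, 1 ≤ i → i ≤ n - 1 → 1 ≤ j → j ≤ n - 1 → j = i + 1 →
      (σi j * η i * σ j) * η i = η i * (σi j * η i * σ j) ∧
      (σi j * η i * σ j) * η j = η j * (σi j * η i * σ j) ∧
      (σi j * η i * σ j) * η i = η i * η j ∧
      (σi j * η i * σ j) * η j = η i * η j := by
  intro i j hi1 hi2 hj1 hj2 hj
  subst hj
  have hd' : Nat.dist (i + 1) i = 1 := by simp [Nat.dist]
  obtain ⟨hs1, hs2⟩ := hinv i hi1 hi2
  obtain ⟨ht1, ht2⟩ := hinv (i + 1) hj1 hj2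
  -- η commutes with the inverse generators
  have hesi : ∀ k, 1 ≤ k → k ≤ n - 1 → η k * σi k = σi k * η k := by
    intro k h1 h2
    obtain ⟨hk1, hk2⟩ := hinv k h1 h2
    have hs := hes k h1 h2
    calc η k * σi k = σi k * σ k * (η k * σi k) := by rw [hk2, one_mul]
      _ = σi k * (σ k * η k * σi k) := by simp only [mul_assoc]
      _ = σi k * (η k * σ k * σi k) := by rw [hs]
      _ = σi k * η k := by rw [mul_assoc (η k), hk1, mul_one]
  have hesii := hesi i hi1 hi2
  have hesij := hesi (i + 1) hj1 hj2
  have hesj := hes (i + 1) hj1 hj2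
  have heeij := hee i (i + 1) hi1 hi2 hj1 hj2
  have h2i : η i * η (i + 1) * σ i = σ i * (η i * η (i + 1)) :=
    (hees i (i + 1) hi1 hi2 hj1 hj2 (by simp [Nat.dist])).2
  have h2j : η (i + 1) * η i * σ (i + 1) = σ (i + 1) * (η (i + 1) * η i) :=
    (hees (i + 1) i hj1 hj2 hi1 hi2 hd').2
  have hsi := hessi (i + 1) i hj1 hj2 hi1 hi2 hd'
  -- key : the long element has a second expression
  have key : σi (i + 1) * η i * σ (i + 1) = σi i * η (i + 1) * σ i := by
    calc σi (i + 1) * η i * σ (i + 1)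
        = σi i * (σ i * (σi (i + 1) * η i) * σ (i + 1)) := by
          simp only [← mul_assoc, hs2, one_mul]
      _ = σi i * (η (i + 1) * (σ i * σi (i + 1)) * σ (i + 1)) := by
          rw [← mul_assoc (σ i), hsi]
      _ = σi i * (η (i + 1) * (σ i * (σi (i + 1) * σ (i + 1)))) := by
          simp only [mul_assoc]
      _ = σi i * η (i + 1) * σ i := by rw [ht2, mul_one, ← mul_assoc]
  have c1 : σi (i + 1) * η i * σ (i + 1) * η i = η i * η (i + 1) := by
    rw [key]
    calc σi i * η (i + 1) * σ i * η i
        = σi i * (η (i + 1) * (σ i * η i)) := by simp only [mul_assoc]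
      _ = σi i * (η (i + 1) * (η i * σ i)) := by rw [← hes i hi1 hi2]
      _ = σi i * (η i * η (i + 1) * σ i) := by
          rw [← mul_assoc (η (i + 1)), ← heeij]
      _ = σi i * (σ i * (η i * η (i + 1))) := by rw [h2i]
      _ = η i * η (i + 1) := by rw [← mul_assoc, hs2, one_mul]
  have c2 : σi (i + 1) * η i * σ (i + 1) * η (i + 1) = η i * η (i + 1) := by
    calc σi (i + 1) * η i * σ (i + 1) * η (i + 1)
        = σi (i + 1) * (η i * (η (i + 1) * σ (i + 1))) := by
          simp only [mul_assoc]; rw [← hesj]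
      _ = σi (i + 1) * (η (i + 1) * η i * σ (i + 1)) := by
          rw [← mul_assoc (η i), heeij]
      _ = σi (i + 1) * (σ (i + 1) * (η (i + 1) * η i)) := by rw [h2j]
      _ = η (i + 1) * η i := by rw [← mul_assoc, ht2, one_mul]
      _ = η i * η (i + 1) := heeij.symm
  have c3 : η i * (σi (i + 1) * η i * σ (i + 1)) = η i * η (i + 1) := by
    rw [key]
    calc η i * (σi i * η (i + 1) * σ i)
        = σi i * (η i * η (i + 1) * σ i) := by
          simp only [← mul_assoc]; rw [hesii]
      _ = σi i * (σ i * (η i * η (i + 1))) := by rw [h2i]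
      _ = η i * η (i + 1) := by rw [← mul_assoc, hs2, one_mul]
  have c4 : η (i + 1) * (σi (i + 1) * η i * σ (i + 1)) = η i * η (i + 1) := by
    calc η (i + 1) * (σi (i + 1) * η i * σ (i + 1))
        = σi (i + 1) * (η (i + 1) * η i * σ (i + 1)) := by
          simp only [← mul_assoc]; rw [hesij]
      _ = σi (i + 1) * (σ (i + 1) * (η (i + 1) * η i)) := by rw [h2j]
      _ = η (i + 1) * η i := by rw [← mul_assoc, ht2, one_mul]
      _ = η i * η (i + 1) := heeij.symm
  exact ⟨c1.trans c3.symm, c2.trans c4.symm, c1, c2⟩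
end

section
/- The mapping σ_i ↦ T_i, η_i ↦ E_i extends to a monoid homomorphism from the tied braid monoid TB_n to the multiplicative monoid of the bt-algebra E_n; i.e., the images T_i, E_i satisfy all defining relations of TB_n, including E_iT_jT_i^{-1} = T_jT_i^{-1}E_j for |i-j|=1. -/
theorem aux_inv {F : Type*} [Field F] {A : Type*} [Ring A] [Algebra F A]
    (u : F) (hu : u ≠ 0) (t e : A)
    (hsq : t * t = 1 + (u - 1) • (e * (1 + t)))
    (hcomm : e * t = t * e) (hid : e * e = e) :
    t * (t + (u⁻¹ - 1) • e + (u⁻¹ - 1) • (e * t)) = 1 ∧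
    (t + (u⁻¹ - 1) • e + (u⁻¹ - 1) • (e * t)) * t = 1 := by
  have hett : e * (t * t) = e + (u-1) • e + (u-1) • (e * t) := by
    rw [hsq]
    simp only [mul_add, mul_one, mul_smul_comm, ← mul_assoc, hid]
    module
  constructor
  · have h1 : t * (e * t) = e + (u-1) • e + (u-1) • (e * t) := by
      rw [← mul_assoc, ← hcomm, mul_assoc, hett]
    rw [mul_add, mul_add, mul_smul_comm, mul_smul_comm, ← hcomm, h1, hsq]
    simp only [mul_add, mul_one]
    match_scalars <;> field_simp <;> ring
  · have h1 : e * t * t = e + (u-1) • e + (u-1) • (e * t) := by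
      rw [mul_assoc, hett]
    rw [add_mul, add_mul, smul_mul_assoc, smul_mul_assoc, h1, hsq]
    simp only [mul_add, mul_one]
    match_scalars <;> field_simp <;> ring

theorem aux_mixed {F : Type*} [Field F] {A : Type*} [Ring A] [Algebra F A]
    (a : F) (ti tj ei ej : A)
    (hETi : ei * ti = ti * ei)
    (hEE : ei * ej = ej * ei)
    (hETT : ei * (tj * ti) = tj * ti * ej)
    (hEETij1 : ei * ej * ti = ti * (ei * ej))
    (hEETji1 : ej * ei * tj = tj * (ej * ei))
    (hEETji2 : ej * ei * tj = ei * tj * ei) :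
    ei * (tj * (ti + a • ei + a • (ei * ti))) =
      tj * (ti + a • ei + a • (ei * ti)) * ej := by
  have k2 : ei * (tj * ei) = tj * (ei * ej) := by
    rw [← mul_assoc, ← hEETji2, hEETji1, ← hEE]
  have k3 : ei * (tj * (ei * ti)) = tj * (ei * ti) * ej := by
    calc ei * (tj * (ei * ti)) = (ei * (tj * ei)) * ti := by
          simp only [mul_assoc]
      _ = tj * (ei * ej * ti) := by rw [k2, mul_assoc]
      _ = tj * (ei * ti) * ej := by
          rw [hEETij1, hETi]; simp only [mul_assoc]
  simp only [mul_add, add_mul, mul_smul_comm, smul_mul_assoc]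
  rw [hETT, k2, k3]
  simp only [mul_assoc]

theorem tb_representation_in_bt_algebra
    {F : Type*} [Field F] {A : Type*} [Ring A] [Algebra F A]
    (n : ℕ) (u : F) (hu : u ≠ 0) (T E : ℕ → A)
    (hTT : ∀ i j, 1 ≤ i → i ≤ n - 1 → 1 ≤ j → j ≤ n - 1 → 1 < Nat.dist i j →
      T i * T j = T j * T i)
    (hbraid : ∀ i j, 1 ≤ i → i ≤ n - 1 → 1 ≤ j → j ≤ n - 1 → Nat.dist i j = 1 →
      T i * T j * T i = T j * T i * T j)
    (hTsq : ∀ i, 1 ≤ i → i ≤ n - 1 → T i * T i = 1 + (u - 1) • (E i * (1 + T i)))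
    (hEE : ∀ i j, 1 ≤ i → i ≤ n - 1 → 1 ≤ j → j ≤ n - 1 → E i * E j = E j * E i)
    (hEsq : ∀ i, 1 ≤ i → i ≤ n - 1 → E i * E i = E i)
    (hET : ∀ i, 1 ≤ i → i ≤ n - 1 → E i * T i = T i * E i)
    (hETfar : ∀ i j, 1 ≤ i → i ≤ n - 1 → 1 ≤ j → j ≤ n - 1 → 1 < Nat.dist i j →
      E i * T j = T j * E i)
    (hEET : ∀ i j, 1 ≤ i → i ≤ n - 1 → 1 ≤ j → j ≤ n - 1 → Nat.dist i j = 1 →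
      E i * E j * T i = T i * (E i * E j) ∧ E i * E j * T i = E j * T i * E j)
    (hETT : ∀ i j, 1 ≤ i → i ≤ n - 1 → 1 ≤ j → j ≤ n - 1 → Nat.dist i j = 1 →
      E i * (T j * T i) = T j * T i * E j)
    (Tinv : ℕ → A)
    (hTinv : ∀ i, 1 ≤ i → i ≤ n - 1 →
      Tinv i = T i + (u⁻¹ - 1) • E i + (u⁻¹ - 1) • (E i * T i)) :
    (∀ i, 1 ≤ i → i ≤ n - 1 → T i * Tinv i = 1 ∧ Tinv i * T i = 1) ∧
    (∀ i j, 1 ≤ i → i ≤ n - 1 → 1 ≤ j → j ≤ n - 1 → E i * E j = E j * E i) ∧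
    (∀ i, 1 ≤ i → i ≤ n - 1 → E i * T i = T i * E i) ∧
    (∀ i j, 1 ≤ i → i ≤ n - 1 → 1 ≤ j → j ≤ n - 1 → 1 < Nat.dist i j →
      E i * T j = T j * E i) ∧
    (∀ i j, 1 ≤ i → i ≤ n - 1 → 1 ≤ j → j ≤ n - 1 → Nat.dist i j = 1 →
      E i * (T j * T i) = T j * T i * E j) ∧
    (∀ i j, 1 ≤ i → i ≤ n - 1 → 1 ≤ j → j ≤ n - 1 → Nat.dist i j = 1 →
      E i * (T j * Tinv i) = T j * Tinv i * E j) ∧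
    (∀ i j, 1 ≤ i → i ≤ n - 1 → 1 ≤ j → j ≤ n - 1 → Nat.dist i j = 1 →
      E i * E j * T i = E j * T i * E j ∧ E i * E j * T i = T i * (E i * E j)) ∧
    (∀ i, 1 ≤ i → i ≤ n - 1 → E i * E i = E i) := by
  refine ⟨?_, hEE, hET, hETfar, hETT, ?_, ?_, hEsq⟩
  · intro i h1 h2
    rw [hTinv i h1 h2]
    exact aux_inv u hu (T i) (E i) (hTsq i h1 h2) (hET i h1 h2) (hEsq i h1 h2)
  · intro i j hi1 hi2 hj1 hj2 hd
    have hd' : Nat.dist j i = 1 := by rwa [Nat.dist_comm]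
    rw [hTinv i hi1 hi2]
    exact aux_mixed (u⁻¹ - 1) (T i) (T j) (E i) (E j) (hET i hi1 hi2)
      (hEE i j hi1 hi2 hj1 hj2) (hETT i j hi1 hi2 hj1 hj2 hd)
      (hEET i j hi1 hi2 hj1 hj2 hd).1 (hEET j i hj1 hj2 hi1 hi2 hd').1
      (hEET j i hj1 hj2 hi1 hi2 hd').2
  · intro i j hi1 hi2 hj1 hj2 hd
    exact ⟨(hEET i j hi1 hi2 hj1 hj2 hd).2, (hEET i j hi1 hi2 hj1 hj2 hd).1⟩
end

section
/- In the bt-algebra E_n, for i with i+1 ≤ n-1 (indices i and i-1 adjacent): T_i E_{i-1} T_i = T_{i-1} E_i T_{i-1} + (1-u) E_i T_{i-1} E_{i-1} + (u-1) T_i E_i E_{i-1}. -/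
theorem bt_TET
    {F : Type*} [Field F] {A : Type*} [Ring A] [Algebra F A]
    (n : ℕ) (u : F) (hu : u ≠ 0) (T E : ℕ → A)
    (hTT : ∀ i j, 1 ≤ i → i ≤ n - 1 → 1 ≤ j → j ≤ n - 1 → 1 < Nat.dist i j →
      T i * T j = T j * T i)
    (hbraid : ∀ i j, 1 ≤ i → i ≤ n - 1 → 1 ≤ j → j ≤ n - 1 → Nat.dist i j = 1 →
      T i * T j * T i = T j * T i * T j)
    (hTsq : ∀ i, 1 ≤ i → i ≤ n - 1 → T i * T i = 1 + (u - 1) • (E i * (1 + T i)))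
    (hEE : ∀ i j, 1 ≤ i → i ≤ n - 1 → 1 ≤ j → j ≤ n - 1 → E i * E j = E j * E i)
    (hEsq : ∀ i, 1 ≤ i → i ≤ n - 1 → E i * E i = E i)
    (hET : ∀ i, 1 ≤ i → i ≤ n - 1 → E i * T i = T i * E i)
    (hETfar : ∀ i j, 1 ≤ i → i ≤ n - 1 → 1 ≤ j → j ≤ n - 1 → 1 < Nat.dist i j →
      E i * T j = T j * E i)
    (hEET : ∀ i j, 1 ≤ i → i ≤ n - 1 → 1 ≤ j → j ≤ n - 1 → Nat.dist i j = 1 →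
      E i * E j * T i = T i * (E i * E j) ∧ E i * E j * T i = E j * T i * E j)
    (hETT : ∀ i j, 1 ≤ i → i ≤ n - 1 → 1 ≤ j → j ≤ n - 1 → Nat.dist i j = 1 →
      E i * (T j * T i) = T j * T i * E j) :
    ∀ i j, 1 ≤ j → i ≤ n - 1 → i = j + 1 →
      T i * E j * T i =
        T j * E i * T j + (1 - u) • (E i * T j * E j) + (u - 1) • (T i * (E i * E j)) := by
  intro i j hj hi hij
  subst hij
  set a := T (j + 1) with ha
  set b := T j with hb
  set e := E (j + 1) with he
  set f := E j with hf
  -- bounds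
  have hj1 : 1 ≤ j + 1 := by omega
  have hjn : j ≤ n - 1 := by omega
  have hd1 : Nat.dist (j + 1) j = 1 := by simp [Nat.dist]
  have hd2 : Nat.dist j (j + 1) = 1 := by simp [Nat.dist]
  -- basic relations
  have h1 : b * b = 1 + (u - 1) • (f * (1 + b)) := hTsq j hj hjn
  have h2 : a * a = 1 + (u - 1) • (e * (1 + a)) := hTsq (j + 1) hj1 hi
  have h3 : e * f = f * e := hEE (j + 1) j hj1 hi hj hjn
  have h4 : f * f = f := hEsq j hj hjn
  have h5 : f * b = b * f := hET j hj hjn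
  have h6 : e * a = a * e := hET (j + 1) hj1 hi
  obtain ⟨hA1, hA2⟩ := hEET j (j + 1) hj hjn hj1 hi hd2
  -- hA1 : f * e * b = b * (f * e),  hA2 : f * e * b = e * b * e
  obtain ⟨hB1, hB2⟩ := hEET (j + 1) j hj1 hi hj hjn hd1
  have hC2 : f * (a * b) = a * b * e := hETT j (j + 1) hj hjn hj1 hi hd2
  -- normalized square of b
  have hbb : b * b = 1 + (u - 1) • f + (u - 1) • (f * b) := by
    rw [h1, mul_add, mul_one, smul_add, add_assoc]
  -- derived monomial identities
  have hC2' : f * (a * b) = a * (b * e) := by rw [hC2, mul_assoc]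
  have m1 : e * (b * e) = b * (f * e) := by rw [← mul_assoc, ← hA2, hA1]
  have m2 : e * (f * b) = b * (f * e) := by rw [← mul_assoc, h3, hA1]
  have mff : f * (f * e) = f * e := by rw [← mul_assoc, h4]
  have mfef : f * e * f = f * e := by rw [mul_assoc, h3, ← mul_assoc, h4]
  have m3 : f * b * (f * e) = b * (f * e) := by rw [h5, mul_assoc, mff]
  have m4 : e * (a * (b * e)) = a * (b * (f * e)) := by
    rw [← mul_assoc, h6, mul_assoc, m1]
  -- the inverse of b
  have hc : (u⁻¹ - 1) * u = 1 - u := by field_simp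
  set S : A := b + (u⁻¹ - 1) • (f * (1 + b)) with hS
  have hfb : b * (f * b) = f + (u - 1) • f + (u - 1) • (b * f) := by
    rw [h5, ← mul_assoc, hbb]
    simp only [add_mul, one_mul, smul_mul_assoc]
    rw [h4, h5, mul_assoc, h4]
  have hbS : b * S = 1 := by
    have exp : b * (f * (1 + b)) = u • f + u • (b * f) := by
      rw [mul_add, mul_one, mul_add, hfb, ← h5]
      module
    rw [hS, mul_add, mul_smul_comm, exp, hbb, ← h5]
    rw [smul_add, smul_smul, smul_smul, hc]
    module
  -- left-hand side times b
  have hL : a * f * a * b = b * e + (u - 1) • (b * (f * e)) + (u - 1) • (a * (b * (f * e))) := by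
    calc a * f * a * b = a * (f * (a * b)) := by noncomm_ring
      _ = a * a * (b * e) := by rw [hC2', ← mul_assoc]
      _ = (1 + (u - 1) • (e * (1 + a))) * (b * e) := by rw [h2]
      _ = b * e + (u - 1) • (e * (b * e)) + (u - 1) • (e * (a * (b * e))) := by
          simp only [add_mul, one_mul, smul_mul_assoc, mul_add, mul_one, mul_assoc]
          module
      _ = b * e + (u - 1) • (b * (f * e)) + (u - 1) • (a * (b * (f * e))) := by
          rw [m1, m4]
  -- right-hand side times b
  have q1 : e * (b * b) = e + (u - 1) • (f * e) + (u - 1) • (b * (f * e)) := by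
    rw [hbb, mul_add, mul_add, mul_one, mul_smul_comm, mul_smul_comm, h3, m2]
  have q3 : b * (b * (f * e)) = f * e + (u - 1) • (f * e) + (u - 1) • (b * (f * e)) := by
    rw [← mul_assoc, hbb]
    simp only [add_mul, one_mul, smul_mul_assoc]
    rw [mff, m3]
  have q2 : b * (e * (b * b)) =
      b * e + (u - 1) • (b * (f * e)) +
        (u - 1) • (f * e + (u - 1) • (f * e) + (u - 1) • (b * (f * e))) := by
    rw [q1, mul_add, mul_add, mul_smul_comm, mul_smul_comm, q3]
  have p2 : e * (b * (f * b)) = f * e + (u - 1) • (f * e) + (u - 1) • (b * (f * e)) := by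
    have step : b * (f * b) = b * b * f := by rw [h5, mul_assoc]
    rw [step, ← mul_assoc, ← mul_assoc, mul_assoc e b b, q1]
    simp only [add_mul, smul_mul_assoc]
    rw [← h3, mul_assoc e f f, h4, h3, mul_assoc b (f*e) f, mfef]
  have p3 : e * (f * b) = b * (f * e) := m2
  have hR : (b * e * b + (1 - u) • (e * b * f) + (u - 1) • (a * (e * f))) * b =
      b * e + (u - 1) • (b * (f * e)) + (u - 1) • (a * (b * (f * e))) := by
    calc (b * e * b + (1 - u) • (e * b * f) + (u - 1) • (a * (e * f))) * b
        = b * (e * (b * b)) + (1 - u) • (e * (b * (f * b))) +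
            (u - 1) • (a * (e * (f * b))) := by
          simp only [add_mul, smul_mul_assoc, mul_assoc]
      _ = (b * e + (u - 1) • (b * (f * e)) +
            (u - 1) • (f * e + (u - 1) • (f * e) + (u - 1) • (b * (f * e)))) +
          (1 - u) • (f * e + (u - 1) • (f * e) + (u - 1) • (b * (f * e))) +
          (u - 1) • (a * (b * (f * e))) := by rw [q2, p2, p3]
      _ = b * e + (u - 1) • (b * (f * e)) + (u - 1) • (a * (b * (f * e))) := by
          module
  -- cancel b on the right
  calc a * f * a = a * f * a * (b * S) := by rw [hbS, mul_one]
    _ = (a * f * a * b) * S := (mul_assoc (a * f * a) b S).symm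
    _ = ((b * e * b + (1 - u) • (e * b * f) + (u - 1) • (a * (e * f))) * b) * S := by
        rw [hL, hR]
    _ = (b * e * b + (1 - u) • (e * b * f) + (u - 1) • (a * (e * f))) * (b * S) := by
        exact mul_assoc _ b S
    _ = b * e * b + (1 - u) • (e * b * f) + (u - 1) • (a * (e * f)) := by
        rw [hbS, mul_one]
end
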